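/- Let M1, M2 be binary matroids over ground sets E1, E2 with E1 ∩ E2 = {e}, where e is neither a loop nor a coloop of M1 or of M2, and let M = M1 Δ M2 be their 2-sum. If each of M1, M2 has three cycles whose union is its ground set, then M has three cycles whose union is its ground set. -/
import Mathlib


/-- A binary matroid, given by its ground set and its cycle space (a GF(2)-subspace,
presented as a family of subsets of the ground set containing `∅` and closed under
symmetric difference). -/
structure BinaryMatroid (α : Type*) [DecidableEq α] where
  E : Finset α
  cycles : Set (Finset α)
  subset_ground : ∀ C ∈ cycles, C ⊆ E
  empty_mem : ∅ ∈ cycles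
  symmDiff_mem : ∀ C ∈ cycles, ∀ D ∈ cycles, symmDiff C D ∈ cycles

variable {α : Type*} [DecidableEq α]

/-- A loop: a one-element cycle (hence circuit). -/
def BinaryMatroid.IsLoop (M : BinaryMatroid α) (e : α) : Prop := {e} ∈ M.cycles

/-- A coloop: an element of the ground set contained in no cycle. -/
def BinaryMatroid.IsColoop (M : BinaryMatroid α) (e : α) : Prop :=
  e ∈ M.E ∧ ∀ C ∈ M.cycles, e ∉ C

/-- `M = M1 Δ M2`: the binary matroid on `E1 Δ E2` whose cycles are the subsets of
`E1 Δ E2` of the form `C1 Δ C2` with `Ci` a cycle of `Mi`. -/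
def DeltaSum (M M1 M2 : BinaryMatroid α) : Prop :=
  M.E = symmDiff M1.E M2.E ∧
  M.cycles = {C | C ⊆ M.E ∧ ∃ C1 ∈ M1.cycles, ∃ C2 ∈ M2.cycles, C = symmDiff C1 C2}

lemma union_symmDiff_union (X Y : Finset α) : X ∪ symmDiff X Y = X ∪ Y := by
  ext x; simp [Finset.mem_symmDiff]; tauto

lemma normalize_triple {S : Set (Finset α)}
    (hS : ∀ C ∈ S, ∀ D ∈ S, symmDiff C D ∈ S)
    {A B C : Finset α} {e : α} (hA : A ∈ S) (hB : B ∈ S) (hC : C ∈ S)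
    (he : e ∈ A ∪ B ∪ C) :
    ∃ A' B' C', A' ∈ S ∧ B' ∈ S ∧ C' ∈ S ∧ A' ∪ B' ∪ C' = A ∪ B ∪ C ∧
      e ∈ A' ∧ e ∉ B' ∧ e ∉ C' := by
  simp only [Finset.mem_union] at he
  by_cases ha : e ∈ A <;> by_cases hb : e ∈ B <;> by_cases hc : e ∈ C
  · exact ⟨A, symmDiff A B, symmDiff A C, hA, hS A hA B hB, hS A hA C hC, by
      ext x; simp [Finset.mem_symmDiff]; tauto, ha, by
      simp [Finset.mem_symmDiff, ha, hb], by simp [Finset.mem_symmDiff, ha, hc]⟩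
  · exact ⟨A, symmDiff A B, C, hA, hS A hA B hB, hC, by
      ext x; simp [Finset.mem_symmDiff]; tauto, ha, by
      simp [Finset.mem_symmDiff, ha, hb], hc⟩
  · exact ⟨A, B, symmDiff A C, hA, hB, hS A hA C hC, by
      ext x; simp [Finset.mem_symmDiff]; tauto, ha, hb, by
      simp [Finset.mem_symmDiff, ha, hc]⟩
  · exact ⟨A, B, C, hA, hB, hC, rfl, ha, hb, hc⟩
  · exact ⟨B, A, symmDiff B C, hB, hA, hS B hB C hC, by
      ext x; simp [Finset.mem_symmDiff]; tauto, hb, ha, by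
      simp [Finset.mem_symmDiff, hb, hc]⟩
  · exact ⟨B, A, C, hB, hA, hC, by ext x; simp; tauto, hb, ha, hc⟩
  · exact ⟨C, B, A, hC, hB, hA, by ext x; simp; tauto, hc, hb, ha⟩
  · tauto

/-- If `M` is the 2-sum of `M1` and `M2` and each `Mi` has three cycles whose
union is its ground set, then so does `M`. -/
theorem stmt_8 (M M1 M2 : BinaryMatroid α) (e : α)
    (hE : M1.E ∩ M2.E = {e})
    (hl1 : ¬ M1.IsLoop e) (hl2 : ¬ M2.IsLoop e)
    (hc1 : ¬ M1.IsColoop e) (hc2 : ¬ M2.IsColoop e)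
    (hsum : DeltaSum M M1 M2)
    (h1 : ∃ A B C, A ∈ M1.cycles ∧ B ∈ M1.cycles ∧ C ∈ M1.cycles ∧ A ∪ B ∪ C = M1.E)
    (h2 : ∃ A B C, A ∈ M2.cycles ∧ B ∈ M2.cycles ∧ C ∈ M2.cycles ∧ A ∪ B ∪ C = M2.E) :
    ∃ A B C, A ∈ M.cycles ∧ B ∈ M.cycles ∧ C ∈ M.cycles ∧ A ∪ B ∪ C = M.E := by
  obtain ⟨hME, hMc⟩ := hsum
  obtain ⟨A1, B1, C1, hA1, hB1, hC1, hU1⟩ := h1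
  obtain ⟨A2, B2, C2, hA2, hB2, hC2, hU2⟩ := h2
  have he1 : e ∈ M1.E := by
    have : e ∈ M1.E ∩ M2.E := by rw [hE]; simp
    exact (Finset.mem_inter.mp this).1
  have he2 : e ∈ M2.E := by
    have : e ∈ M1.E ∩ M2.E := by rw [hE]; simp
    exact (Finset.mem_inter.mp this).2
  have hint : ∀ x, x ∈ M1.E → x ∈ M2.E → x = e := by
    intro x h1 h2
    have : x ∈ M1.E ∩ M2.E := Finset.mem_inter.mpr ⟨h1, h2⟩
    rw [hE] at this; exact Finset.mem_singleton.mp this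
  obtain ⟨A1', B1', C1', hA1', hB1', hC1', hU1', heA1, heB1, heC1⟩ :=
    normalize_triple M1.symmDiff_mem hA1 hB1 hC1 (hU1 ▸ he1)
  obtain ⟨A2', B2', C2', hA2', hB2', hC2', hU2', heA2, heB2, heC2⟩ :=
    normalize_triple M2.symmDiff_mem hA2 hB2 hC2 (hU2 ▸ he2)
  rw [hU1] at hU1'; rw [hU2] at hU2'
  -- subsets of ground sets
  have s1 : ∀ {X : Finset α}, X ∈ M1.cycles → X ⊆ M1.E := fun h => M1.subset_ground _ h
  have s2 : ∀ {X : Finset α}, X ∈ M2.cycles → X ⊆ M2.E := fun h => M2.subset_ground _ h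
  have key : ∀ X Y : Finset α, X ∈ M1.cycles → Y ∈ M2.cycles →
      ((e ∈ X ∧ e ∈ Y) ∨ (e ∉ X ∧ e ∉ Y)) → symmDiff X Y ⊆ M.E := by
    intro X Y hX hY hpar x hx
    rw [Finset.mem_symmDiff] at hx
    rw [hME, Finset.mem_symmDiff]
    rcases hx with ⟨hxX, hxY⟩ | ⟨hxY, hxX⟩
    · left
      refine ⟨s1 hX hxX, fun hx2 => ?_⟩
      have := hint x (s1 hX hxX) hx2
      subst this
      rcases hpar with ⟨h, h'⟩ | ⟨h, h'⟩
      · exact hxY h'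
      · exact h hxX
    · right
      refine ⟨s2 hY hxY, fun hx1 => ?_⟩
      have := hint x hx1 (s2 hY hxY)
      subst this
      rcases hpar with ⟨h, h'⟩ | ⟨h, h'⟩
      · exact hxX h
      · exact h' hxY
  have hAsub := key A1' A2' hA1' hA2' (Or.inl ⟨heA1, heA2⟩)
  have hBsub := key B1' B2' hB1' hB2' (Or.inr ⟨heB1, heB2⟩)
  have hCsub := key C1' C2' hC1' hC2' (Or.inr ⟨heC1, heC2⟩)
  refine ⟨symmDiff A1' A2', symmDiff B1' B2', symmDiff C1' C2', ?_, ?_, ?_, ?_⟩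
  · rw [hMc]; exact ⟨hAsub, A1', hA1', A2', hA2', rfl⟩
  · rw [hMc]; exact ⟨hBsub, B1', hB1', B2', hB2', rfl⟩
  · rw [hMc]; exact ⟨hCsub, C1', hC1', C2', hC2', rfl⟩
  · apply Finset.Subset.antisymm
    · intro x hx
      simp only [Finset.mem_union] at hx
      rcases hx with (hx | hx) | hx
      exacts [hAsub hx, hBsub hx, hCsub hx]
    · intro x hx
      rw [hME, Finset.mem_symmDiff] at hx
      simp only [Finset.mem_union, Finset.mem_symmDiff]
      rcases hx with ⟨hx1, hx2⟩ | ⟨hx2, hx1⟩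
      · have hx1' : x ∈ A1' ∪ B1' ∪ C1' := hU1' ▸ hx1
        have nA2 : x ∉ A2' := fun h => hx2 (s2 hA2' h)
        have nB2 : x ∉ B2' := fun h => hx2 (s2 hB2' h)
        have nC2 : x ∉ C2' := fun h => hx2 (s2 hC2' h)
        simp only [Finset.mem_union] at hx1'
        rcases hx1' with (h | h) | h
        · exact Or.inl (Or.inl (Or.inl ⟨h, nA2⟩))
        · exact Or.inl (Or.inr (Or.inl ⟨h, nB2⟩))
        · exact Or.inr (Or.inl ⟨h, nC2⟩)
      · have hx2' : x ∈ A2' ∪ B2' ∪ C2' := hU2' ▸ hx2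
        have nA1 : x ∉ A1' := fun h => hx1 (s1 hA1' h)
        have nB1 : x ∉ B1' := fun h => hx1 (s1 hB1' h)
        have nC1 : x ∉ C1' := fun h => hx1 (s1 hC1' h)
        simp only [Finset.mem_union] at hx2'
        rcases hx2' with (h | h) | h
        · exact Or.inl (Or.inl (Or.inr ⟨h, nA1⟩))
        · exact Or.inl (Or.inr (Or.inr ⟨h, nB1⟩))
        · exact Or.inr (Or.inr ⟨h, nC1⟩)
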